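/- Let S be a set, σ a homogeneous braiding symbol over S with decorated rooted tree T(σ), and w = (s₁^{ε₁}, …, s_n^{ε_n}) a word over S. Run the following one-pass algorithm: to each vertex v of T(σ) assign counters Σ_v, Δ_v ∈ ℚ, both initialized to 0; for i = 1, …, n process the letter sᵢ^{εᵢ} by visiting every vertex v of T(σ), each vertex visited only after all of its children have been visited for this letter, and performing: (1) Σ_v ← Σ_v + Δ_v and Δ_v ← 0; (2) m ← εᵢ·h_v(sᵢ)·∏_{c a child of v} Σ_c (the empty product being 1); (3) if εᵢ = −1 then Σ_v ← Σ_v + m, and if εᵢ = +1 then Δ_v ← Δ_v + m. Then: (a) for every 1 ≤ i ≤ n and every vertex v, after the letters 1, …, i have been processed the value of Σ_v equals ⌊w*Φ_v⌉_w(i), the cobounding at i of the d-function of the subsymbol Φ_v supported at v; and (b) after all n letters have been processed, Σ_r + Δ_r = σ(w), where r is the root of T(σ). -/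

import Mathlib

namespace Braiding

variable {S : Type*}

abbrev Word (S : Type*) := List (S × Bool)
def sgn (b : Bool) : ℚ := if b then 1 else -1
def epsAt (w : Word S) (j : ℕ) : Bool := (w[j]?.map Prod.snd).getD true
def indD (h : S → ℚ) (w : Word S) (i : ℕ) : ℚ :=
  match w[i]? with
  | some (s, b) => sgn b * h s
  | none => 0
def leW (w : Word S) (i j : ℕ) : Prop :=
  if epsAt w j = true then i < j else i ≤ j
instance (w : Word S) (i j : ℕ) : Decidable (leW w i j) := by
  unfold leW; infer_instance
def cobound (w : Word S) (f : ℕ → ℚ) (j : ℕ) : ℚ :=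
  ∑ i ∈ Finset.range w.length, if leW w i j then f i else 0
def braidMul (w : Word S) (f g : ℕ → ℚ) (j : ℕ) : ℚ := cobound w f j * g j
def integ (w : Word S) (f : ℕ → ℚ) : ℚ := ∑ i ∈ Finset.range w.length, f i

inductive HSymbol (S : Type*) where
  | leaf : (S → ℚ) → HSymbol S
  | node : HSymbol S → HSymbol S → HSymbol S

namespace HSymbol

def weight : HSymbol S → ℕ
  | leaf _ => 1
  | node α β => weight α + weight β

def dfun (w : Word S) : HSymbol S → ℕ → ℚ
  | leaf h => indD h w
  | node α β => braidMul w (dfun w α) (dfun w β)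

def value (σ : HSymbol S) (w : Word S) : ℚ := integ w (σ.dfun w)

/-- The vertex set of the rooted tree `T(σ)` of a homogeneous braiding symbol:
a leaf symbol has a single vertex; for `⌊α⌉β` the tree of `α` is grafted onto the
root of the tree of `β`. -/
def Vertex : HSymbol S → Type
  | leaf _ => Unit
  | node α β => Vertex α ⊕ Vertex β

def vDecEq : (σ : HSymbol S) → DecidableEq (Vertex σ)
  | leaf _ => inferInstanceAs (DecidableEq Unit)
  | node α β =>
      letI := vDecEq α
      letI := vDecEq β
      inferInstanceAs (DecidableEq (Vertex α ⊕ Vertex β))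

instance (σ : HSymbol S) : DecidableEq (Vertex σ) := vDecEq σ

def vFintype : (σ : HSymbol S) → Fintype (Vertex σ)
  | leaf _ => inferInstanceAs (Fintype Unit)
  | node α β =>
      letI := vFintype α
      letI := vFintype β
      inferInstanceAs (Fintype (Vertex α ⊕ Vertex β))

instance (σ : HSymbol S) : Fintype (Vertex σ) := vFintype σ

/-- The root of the tree `T(σ)`. -/
def root : (σ : HSymbol S) → Vertex σ
  | leaf _ => ()
  | node _ β => Sum.inr (root β)

/-- The decorating function `h_v : S → ℚ` at a vertex. -/
def dec : (σ : HSymbol S) → Vertex σ → (S → ℚ)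
  | leaf h, _ => h
  | node α _, Sum.inl u => dec α u
  | node _ β, Sum.inr u => dec β u

/-- The strict tree order on `T(σ)`: `u < v` iff `u ≠ v` and `v` lies on the path
from `u` to the root. -/
def treeLT : (σ : HSymbol S) → Vertex σ → Vertex σ → Prop
  | leaf _, _, _ => False
  | node α _, Sum.inl u, Sum.inl v => treeLT α u v
  | node _ β, Sum.inl _, Sum.inr v => v = root β
  | node _ _, Sum.inr _, Sum.inl _ => False
  | node _ β, Sum.inr u, Sum.inr v => treeLT β u v

def treeLTDec : (σ : HSymbol S) → (u v : Vertex σ) → Decidable (treeLT σ u v)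
  | leaf _, _, _ => inferInstanceAs (Decidable False)
  | node α _, Sum.inl u, Sum.inl v => treeLTDec α u v
  | node _ β, Sum.inl _, Sum.inr v => inferInstanceAs (Decidable (v = root β))
  | node _ _, Sum.inr _, Sum.inl _ => inferInstanceAs (Decidable False)
  | node _ β, Sum.inr u, Sum.inr v => treeLTDec β u v

instance (σ : HSymbol S) (u v : Vertex σ) : Decidable (treeLT σ u v) := treeLTDec σ u v

end HSymbol

end Braiding

namespace Braiding
namespace HSymbol

variable {S : Type*}

/-- The subsymbol `Φ_v` supported at a vertex `v`: the symbol corresponding to the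
subtree consisting of `v` together with all of its descendants. -/
def sub : (σ : HSymbol S) → Vertex σ → HSymbol S
  | leaf h, _ => leaf h
  | node α _, Sum.inl u => sub α u
  | node α β, Sum.inr u => if u = root β then node α β else sub β u

/-- One step of the one-pass evaluation algorithm: process a single letter `(s, e)`
(`e = true` meaning exponent `+1`), updating counters `(Σ_v, Δ_v)` at every vertex,
children being processed before their parents.  The extra factor `extra` multiplies
the quantity `m` computed at the root (used to graft subtrees recursively):
at each vertex one performs
(1) `Σ_v += Δ_v; Δ_v := 0`;
(2) `m := ε·h_v(s)·Π_{c child of v} Σ_c` (new values of `Σ_c`);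
(3) if `ε = -1` then `Σ_v += m` else `Δ_v += m`. -/
def procAux : (σ : HSymbol S) → S × Bool → ℚ → (Vertex σ → ℚ) → (Vertex σ → ℚ) →
    (Vertex σ → ℚ) × (Vertex σ → ℚ)
  | leaf h, (s, e), extra, Sv, Dv =>
      let S1 := Sv () + Dv ()
      let m := (if e then (1 : ℚ) else -1) * h s * extra
      if e then (fun _ => S1, fun _ => m) else (fun _ => S1 + m, fun _ => 0)
  | node α β, (s, e), extra, Sv, Dv =>
      let pa := procAux α (s, e) 1 (Sv ∘ Sum.inl) (Dv ∘ Sum.inl)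
      let pb := procAux β (s, e) (extra * pa.1 (root α)) (Sv ∘ Sum.inr) (Dv ∘ Sum.inr)
      (Sum.elim pa.1 pb.1, Sum.elim pa.2 pb.2)

/-- Running the one-pass algorithm on a word, starting from all counters zero. -/
def runAlg (σ : HSymbol S) (w : Word S) : (Vertex σ → ℚ) × (Vertex σ → ℚ) :=
  w.foldl (fun st p => procAux σ p 1 st.1 st.2) (fun _ => 0, fun _ => 0)

end HSymbol
end Braiding

namespace Braiding
namespace HSymbol

variable {S : Type*}

lemma sub_root (σ : HSymbol S) : σ.sub σ.root = σ := by
  induction σ with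
  | leaf h => rfl
  | node α β _ _ => simp [sub, root]

lemma dfun_eq_zero (w : Word S) (σ : HSymbol S) (i : ℕ) (h : w.length ≤ i) :
    dfun w σ i = 0 := by
  induction σ with
  | leaf f => simp [dfun, indD, List.getElem?_eq_none h]
  | node α β ihα ihβ => simp [dfun, braidMul, ihβ]

lemma epsAt_eq (w : Word S) {j : ℕ} {s : S} {e : Bool} (hj : w[j]? = some (s, e)) :
    epsAt w j = e := by simp [epsAt, hj]

lemma cobound_eq (w : Word S) (f : ℕ → ℚ) {j : ℕ} (hj : j < w.length) :
    cobound w f j = (∑ i ∈ Finset.range j, f i) + (if epsAt w j then 0 else f j) := by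
  unfold cobound
  rcases Bool.eq_false_or_eq_true (epsAt w j) with he | he
  · have h1 : ∀ i, leW w i j ↔ i < j := by
      intro i; simp [leW, he]
    rw [show (if epsAt w j = true then (0:ℚ) else f j) = 0 by rw [he]; simp, add_zero]
    calc ∑ i ∈ Finset.range w.length, (if leW w i j then f i else 0)
        = ∑ i ∈ Finset.range w.length, (if i ∈ Finset.range j then f i else 0) := by
          refine Finset.sum_congr rfl fun i _ => ?_
          simp [h1, Finset.mem_range]
      _ = ∑ i ∈ Finset.range j, f i := by
          rw [Finset.sum_ite_mem, Finset.inter_eq_right.mpr]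
          exact Finset.range_subset_range.mpr hj.le
  · have h1 : ∀ i, leW w i j ↔ i < j + 1 := by
      intro i; simp [leW, he, Nat.lt_succ_iff]
    rw [show (if epsAt w j = true then (0:ℚ) else f j) = f j by rw [he]; simp]
    calc ∑ i ∈ Finset.range w.length, (if leW w i j then f i else 0)
        = ∑ i ∈ Finset.range w.length, (if i ∈ Finset.range (j+1) then f i else 0) := by
          refine Finset.sum_congr rfl fun i _ => ?_
          simp [h1, Finset.mem_range]
      _ = ∑ i ∈ Finset.range (j+1), f i := by
          rw [Finset.sum_ite_mem, Finset.inter_eq_right.mpr]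
          exact Finset.range_subset_range.mpr hj
      _ = _ := by rw [Finset.sum_range_succ]

lemma procAux_spec (w : Word S) {j : ℕ} {s : S} {e : Bool}
    (hj : w[j]? = some (s, e)) :
    ∀ (σ : HSymbol S) (F : ℕ → ℚ) (extra : ℚ) (Sv Dv : Vertex σ → ℚ),
    F j = extra * dfun w σ j →
    (∀ v, Sv v + Dv v =
      ∑ i ∈ Finset.range j, (if v = σ.root then F i else dfun w (σ.sub v) i)) →
    (∀ v, (procAux σ (s, e) extra Sv Dv).1 v =
        (∑ i ∈ Finset.range j, (if v = σ.root then F i else dfun w (σ.sub v) i)) +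
        (if e then 0 else if v = σ.root then F j else dfun w (σ.sub v) j)) ∧
    (∀ v, (procAux σ (s, e) extra Sv Dv).2 v =
        if e then (if v = σ.root then F j else dfun w (σ.sub v) j) else 0) := by
  have hjlen : j < w.length := by
    by_contra hc
    rw [List.getElem?_eq_none (Nat.le_of_not_lt hc)] at hj
    cases hj
  intro σ
  induction σ with
  | leaf h =>
      intro F extra Sv Dv hF H
      have hd : dfun w (leaf h) j = sgn e * h s := by simp [dfun, indD, hj]
      have hroot : ∀ v : Vertex (leaf h : HSymbol S), v = (leaf h : HSymbol S).root :=
        fun v => rfl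
      have h2 : ∀ (v : Vertex (leaf h : HSymbol S)) (i : ℕ),
          (if v = (leaf h : HSymbol S).root then F i else dfun w ((leaf h).sub v) i) = F i :=
        fun v i => if_pos (hroot v)
      have hm : (if e then (1:ℚ) else -1) * h s * extra = F j := by
        rw [hF, hd]; unfold sgn; ring
      have hSD : Sv () + Dv () = ∑ i ∈ Finset.range j, F i := by
        rw [H ()]; exact Finset.sum_congr rfl fun i _ => h2 () i
      cases e with
      | true =>
          refine ⟨fun v => ?_, fun v => ?_⟩
          · simp only [h2]
            show Sv () + Dv () = _
            rw [hSD]; simp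
          · simp only [h2]
            show (if true then (1:ℚ) else -1) * h s * extra = _
            rw [hm]; simp
      | false =>
          refine ⟨fun v => ?_, fun v => ?_⟩
          · simp only [h2]
            show Sv () + Dv () + (if false then (1:ℚ) else -1) * h s * extra = _
            rw [hSD, hm]; simp
          · simp only [h2]
            show (0 : ℚ) = _
            simp
  | node α β ihα ihβ =>
      intro F extra Sv Dv hF H
      -- target simplification at the two kinds of vertices
      have tgt_inl : ∀ (u : Vertex α) (i : ℕ),
          (@ite _ (@Eq (Vertex (node α β)) (@Sum.inl (Vertex α) (Vertex β) u) (node α β).root)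
            (instDecidableEqVertex (node α β) _ _) (F i)
            (dfun w ((node α β).sub (Sum.inl u)) i))
          = (if u = α.root then dfun w α i else dfun w (α.sub u) i) := by
        intro u i
        rw [if_neg (by simp [root])]
        by_cases hu : u = α.root
        · rw [if_pos hu, hu]; simp [sub, sub_root]
        · rw [if_neg hu]; rfl
      have tgt_inr : ∀ (u : Vertex β) (i : ℕ),
          (@ite _ (@Eq (Vertex (node α β)) (@Sum.inr (Vertex α) (Vertex β) u) (node α β).root)
            (instDecidableEqVertex (node α β) _ _) (F i)
            (dfun w ((node α β).sub (Sum.inr u)) i))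
          = (if u = β.root then F i else dfun w (β.sub u) i) := by
        intro u i
        by_cases hu : u = β.root
        · rw [if_pos hu, if_pos (by rw [hu]; rfl)]
        · rw [if_neg hu, if_neg (by intro h; exact hu (Sum.inr.inj h))]
          simp [sub, hu]
      have Hα : ∀ u, (Sv ∘ Sum.inl) u + (Dv ∘ Sum.inl) u =
          ∑ i ∈ Finset.range j, (if u = α.root then dfun w α i else dfun w (α.sub u) i) := by
        intro u
        have := H (Sum.inl u)
        simp only [tgt_inl] at this; exact this
      have specα := ihα (dfun w α) 1 (Sv ∘ Sum.inl) (Dv ∘ Sum.inl) (one_mul _).symm Hα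
      set pa := procAux α (s, e) 1 (Sv ∘ Sum.inl) (Dv ∘ Sum.inl) with hpa
      have hra : pa.1 α.root = cobound w (dfun w α) j := by
        rw [specα.1 α.root, cobound_eq w _ hjlen, epsAt_eq w hj]
        simp
      have hFβ : F j = (extra * pa.1 α.root) * dfun w β j := by
        rw [hra, hF]
        simp only [dfun, braidMul]
        ring
      have Hβ : ∀ u, (Sv ∘ Sum.inr) u + (Dv ∘ Sum.inr) u =
          ∑ i ∈ Finset.range j, (if u = β.root then F i else dfun w (β.sub u) i) := by
        intro u
        have := H (Sum.inr u)
        simp only [tgt_inr] at this; exact this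
      have specβ := ihβ F (extra * pa.1 α.root) (Sv ∘ Sum.inr) (Dv ∘ Sum.inr) hFβ Hβ
      constructor <;> rintro (u | u)
      · rw [show (procAux (node α β) (s, e) extra Sv Dv).1 (Sum.inl u) = pa.1 u from rfl,
          specα.1 u, tgt_inl]
        by_cases he : e <;> simp [he, tgt_inl]
      · rw [show (procAux (node α β) (s, e) extra Sv Dv).1 (Sum.inr u)
            = (procAux β (s, e) (extra * pa.1 α.root) (Sv ∘ Sum.inr) (Dv ∘ Sum.inr)).1 u from rfl,
          specβ.1 u]
        by_cases he : e <;> simp [he, tgt_inr]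
      · rw [show (procAux (node α β) (s, e) extra Sv Dv).2 (Sum.inl u) = pa.2 u from rfl,
          specα.2 u]
        by_cases he : e <;> simp [he, tgt_inl]
      · rw [show (procAux (node α β) (s, e) extra Sv Dv).2 (Sum.inr u)
            = (procAux β (s, e) (extra * pa.1 α.root) (Sv ∘ Sum.inr) (Dv ∘ Sum.inr)).2 u from rfl,
          specβ.2 u]
        by_cases he : e <;> simp [he, tgt_inr]


lemma htgt (w : Word S) (σ : HSymbol S) :
    ∀ (v : Vertex σ) (i : ℕ),
      (if v = σ.root then dfun w σ i else dfun w (σ.sub v) i) = dfun w (σ.sub v) i := by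
  intro v i
  by_cases hv : v = σ.root
  · rw [if_pos hv, hv, sub_root]
  · rw [if_neg hv]

lemma runAlg_take_succ (σ : HSymbol S) (w : Word S) {k : ℕ} {s : S} {e : Bool}
    (hk : w[k]? = some (s, e)) :
    runAlg σ (w.take (k + 1)) =
      procAux σ (s, e) 1 (runAlg σ (w.take k)).1 (runAlg σ (w.take k)).2 := by
  unfold runAlg
  rw [List.take_succ, hk]
  simp [List.foldl_append]

lemma runAlg_inv (σ : HSymbol S) (w : Word S) :
    ∀ k ≤ w.length, ∀ v : Vertex σ,
      (runAlg σ (w.take k)).1 v + (runAlg σ (w.take k)).2 v =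
      ∑ i ∈ Finset.range k, dfun w (σ.sub v) i := by
  intro k
  induction k with
  | zero => intro _ v; simp [runAlg]
  | succ k ih =>
      intro hk v
      have hk' : k < w.length := hk
      have hp : w[k]? = some (w[k].1, w[k].2) := by
        rw [List.getElem?_eq_getElem hk']
      have spec := procAux_spec w hp σ (dfun w σ) 1
        (runAlg σ (w.take k)).1 (runAlg σ (w.take k)).2 (one_mul _).symm
        (fun u => by
          rw [ih hk'.le u]
          exact Finset.sum_congr rfl fun i _ => (htgt w σ u i).symm)
      rw [runAlg_take_succ σ w hp, spec.1 v, spec.2 v]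
      simp only [htgt w σ]
      rw [Finset.sum_range_succ]
      by_cases he : w[k].2 <;> simp [he]

lemma runAlg_S (σ : HSymbol S) (w : Word S) {i : ℕ} (hi : i < w.length) (v : Vertex σ) :
    (runAlg σ (w.take (i + 1))).1 v = cobound w (dfun w (σ.sub v)) i := by
  have hp : w[i]? = some (w[i].1, w[i].2) := by
    rw [List.getElem?_eq_getElem hi]
  have spec := procAux_spec w hp σ (dfun w σ) 1
    (runAlg σ (w.take i)).1 (runAlg σ (w.take i)).2 (one_mul _).symm
    (fun u => by
      rw [runAlg_inv σ w i hi.le u]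
      exact Finset.sum_congr rfl fun k _ => (htgt w σ u k).symm)
  rw [runAlg_take_succ σ w hp, spec.1 v]
  simp only [htgt w σ]
  rw [cobound_eq w _ hi, epsAt_eq w hp]


end HSymbol
end Braiding


open Braiding Braiding.HSymbol in
/-- Correctness of the one-pass evaluation algorithm.
(Positions are indexed from `0`, so "after the letters `1, …, i` have been processed"
becomes "after processing the prefix of length `i + 1`".)
(a) After processing the prefix of length `i + 1` of `w`, the counter `Σ_v` equals
`⌊w*Φ_v⌉_w(i)`, the cobounding at `i` of the d-function of the subsymbol `Φ_v`
supported at `v`.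
(b) After all letters have been processed, `Σ_r + Δ_r = σ(w)` at the root `r`. -/
theorem one_pass_algorithm_computes_letterBraiding {S : Type*}
    (σ : HSymbol S) (w : Word S) :
    (∀ i < w.length, ∀ v : Vertex σ,
      (runAlg σ (w.take (i + 1))).1 v = cobound w ((σ.sub v).dfun w) i) ∧
    (runAlg σ w).1 σ.root + (runAlg σ w).2 σ.root = σ.value w := by
  constructor
  · intro i hi v
    exact runAlg_S σ w hi v
  · have h := runAlg_inv σ w w.length le_rfl σ.root
    rw [List.take_length] at h
    rw [h, sub_root]
    rfl
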